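/- Let d ≥ 1, r ≥ 1, and let s be an integer with gcd(s, d) = 1. Let π be the group with presentation ⟨a, t | a^d = 1, t^r·a·t^{−r} = a^s⟩, i.e. the quotient of the free group on two generators a and t by the normal closure of the relators a^d and t^r·a·t^{−r}·a^{−s}. Let ε : π → ℤ be the homomorphism determined by ε(a) = 0 and ε(t) = 1 (which is well defined since both relators map to 0). Then the kernel of ε is isomorphic to the free product of r copies of the cyclic group ℤ/dℤ. -/

import Mathlib

/-- The two generators `a` and `t` of the presentation `⟨a, t | a^d = 1, t^r a t^{-r} = a^s⟩`,
encoded as the elements of `Bool`. -/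
def stmt5Gen_a : Bool := true
def stmt5Gen_t : Bool := false

/-- The relators `a^d` and `t^r · a · t^{-r} · a^{-s}`. -/
def stmt5Rels (d r : ℕ) (s : ℤ) : Set (FreeGroup Bool) :=
  {FreeGroup.of stmt5Gen_a ^ d,
   FreeGroup.of stmt5Gen_t ^ r * FreeGroup.of stmt5Gen_a * (FreeGroup.of stmt5Gen_t ^ r)⁻¹ *
     (FreeGroup.of stmt5Gen_a ^ s)⁻¹}

set_option linter.unusedSectionVars false

namespace Stmt5Aux

open Monoid Multiplicative

variable (d r : ℕ) [NeZero d] [NeZero r] (s : ℤ)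

abbrev K := Monoid.CoprodI (fun _ : Fin r => Multiplicative (ZMod d))

lemma isUnit_s (hs : Int.gcd s d = 1) : IsUnit ((s : ZMod d)) := by
  have h : IsCoprime (s : ZMod d) ((d : ℤ) : ZMod d) :=
    (Int.isCoprime_iff_gcd_eq_one.mpr hs).map (Int.castRingHom (ZMod d))
  rw [Int.cast_natCast, ZMod.natCast_self] at h
  exact isCoprime_zero_right.mp h

variable {d}

/-- the twist automorphism x ↦ x^s of Multiplicative (ZMod d) -/
noncomputable def tw (hs : Int.gcd s d = 1) :
    Multiplicative (ZMod d) ≃* Multiplicative (ZMod d) :=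
  AddEquiv.toMultiplicative (AddAut.mulLeft (isUnit_s d s hs).unit)

lemma tw_apply (hs : Int.gcd s d = 1) (a : Multiplicative (ZMod d)) : tw s hs a = a ^ s := by
  apply Multiplicative.toAdd.injective
  show ((isUnit_s d s hs).unit : ZMod d) * a.toAdd = (a ^ s).toAdd
  rw [IsUnit.unit_spec, toAdd_zpow, zsmul_eq_mul]

lemma generator_eq (a : Multiplicative (ZMod d)) :
    a = (ofAdd (1 : ZMod d)) ^ (a.toAdd.val) := by
  apply Multiplicative.toAdd.injective
  rw [toAdd_pow, toAdd_ofAdd, nsmul_eq_mul, mul_one, ZMod.natCast_val, ZMod.cast_id]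

lemma homA_ext {M : Type*} [Monoid M] {f₁ f₂ : Multiplicative (ZMod d) →* M}
    (h : f₁ (ofAdd (1 : ZMod d)) = f₂ (ofAdd (1 : ZMod d))) : f₁ = f₂ := by
  refine MonoidHom.ext fun a => ?_
  rw [generator_eq a, map_pow, map_pow, h]

variable {r}
variable (hs : Int.gcd s d = 1)

/-- the shift endomorphism -/
noncomputable def σf : K d r →* K d r :=
  Monoid.CoprodI.lift fun i =>
    (Monoid.CoprodI.of (M := fun _ : Fin r => Multiplicative (ZMod d)) (i := i + 1)).comp
      (if i + 1 = 0 then (tw s hs).toMonoidHom else MonoidHom.id _)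

noncomputable def τf : K d r →* K d r :=
  Monoid.CoprodI.lift fun i =>
    (Monoid.CoprodI.of (M := fun _ : Fin r => Multiplicative (ZMod d)) (i := i - 1)).comp
      (if i = 0 then (tw s hs).symm.toMonoidHom else MonoidHom.id _)

lemma σf_of (i : Fin r) (a : Multiplicative (ZMod d)) :
    σf s hs (Monoid.CoprodI.of (M := fun _ : Fin r => Multiplicative (ZMod d)) (i := i) a) =
      Monoid.CoprodI.of (i := i + 1) (if i + 1 = 0 then tw s hs a else a) := by
  rw [σf, Monoid.CoprodI.lift_of]
  split <;> rfl

lemma τf_of (i : Fin r) (a : Multiplicative (ZMod d)) :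
    τf s hs (Monoid.CoprodI.of (M := fun _ : Fin r => Multiplicative (ZMod d)) (i := i) a) =
      Monoid.CoprodI.of (i := i - 1) (if i = 0 then (tw s hs).symm a else a) := by
  rw [τf, Monoid.CoprodI.lift_of]
  split <;> rfl

lemma of_congr {i j : Fin r} (h : i = j) (a : Multiplicative (ZMod d)) :
    Monoid.CoprodI.of (M := fun _ : Fin r => Multiplicative (ZMod d)) (i := i) a =
      Monoid.CoprodI.of (i := j) a := by subst h; rfl

lemma τσ : (τf s hs).comp (σf s hs) = MonoidHom.id (K d r) := by
  apply Monoid.CoprodI.ext_hom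
  intro i
  refine MonoidHom.ext fun a => ?_
  simp only [MonoidHom.comp_apply, MonoidHom.id_apply, σf_of, τf_of]
  rw [of_congr (add_sub_cancel_right i 1)]
  by_cases h : i + 1 = 0
  · simp [h]
  · simp [h]

lemma στ : (σf s hs).comp (τf s hs) = MonoidHom.id (K d r) := by
  apply Monoid.CoprodI.ext_hom
  intro i
  refine MonoidHom.ext fun a => ?_
  simp only [MonoidHom.comp_apply, MonoidHom.id_apply, σf_of, τf_of]
  rw [of_congr (sub_add_cancel i 1)]
  by_cases h : i = 0
  · simp [h, sub_add_cancel]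
  · have h2 : i - 1 + 1 ≠ 0 := by rwa [sub_add_cancel]
    simp [h, h2]

/-- the shift automorphism of the free product -/
noncomputable def σA : K d r ≃* K d r :=
  MonoidHom.toMulEquiv (σf s hs) (τf s hs) (τσ s hs) (στ s hs)

lemma σA_of (i : Fin r) (a : Multiplicative (ZMod d)) :
    σA s hs (Monoid.CoprodI.of (M := fun _ : Fin r => Multiplicative (ZMod d)) (i := i) a) =
      Monoid.CoprodI.of (i := i + 1) (if i + 1 = 0 then tw s hs a else a) := σf_of s hs i a


lemma σA_pow_of (k : ℕ) (hk : k < r) (x : Multiplicative (ZMod d)) :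
    ((σA s hs) ^ k : MulAut (K d r)) (Monoid.CoprodI.of (i := (0 : Fin r)) x) =
      Monoid.CoprodI.of (i := (⟨k, hk⟩ : Fin r)) x := by
  induction k with
  | zero =>
     rw [pow_zero]
     exact (of_congr (by ext; simp) x).symm
  | succ k ih =>
    have hk' : k < r := by omega
    rw [pow_succ', MulAut.mul_apply, ih hk', σA_of]
    have hco : (⟨k, hk'⟩ : Fin r) + 1 = (⟨k + 1, hk⟩ : Fin r) := by
      ext
      show (k + 1 % r) % r = k + 1
      have h1 : 1 % r = 1 := Nat.mod_eq_of_lt (by omega)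
      rw [h1, Nat.mod_eq_of_lt hk]
    rw [hco]
    have hne : (⟨k + 1, hk⟩ : Fin r) ≠ 0 := by
      simp [Fin.ext_iff]
    simp [hne]

lemma σA_pow_r (x : Multiplicative (ZMod d)) :
    ((σA s hs) ^ r : MulAut (K d r)) (Monoid.CoprodI.of (i := (0 : Fin r)) x) =
      Monoid.CoprodI.of (i := (0 : Fin r)) (tw s hs x) := by
  have hr : 0 < r := Nat.pos_of_ne_zero (NeZero.ne r)
  have key : ((σA s hs : MulAut (K d r))) ^ r = (σA s hs : MulAut (K d r)) * (σA s hs) ^ (r - 1) := by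
    rw [← pow_succ']; congr 1; omega
  have ih' := σA_pow_of s hs (r - 1) (show r - 1 < r by omega) x
  rw [key, MulAut.mul_apply, ih', σA_of]
  have hco : (⟨r - 1, by omega⟩ : Fin r) + 1 = (0 : Fin r) := by
    ext
    show (r - 1 + (1 % r)) % r = (0 : Fin r).val
    rcases eq_or_lt_of_le (Nat.succ_le_of_lt hr) with h | h
    · simp [← h]
    · rw [Nat.mod_eq_of_lt h, Nat.sub_add_cancel hr, Nat.mod_self]
      simp
  rw [hco]
  simp


/-! ### The presented group -/

variable (d) (r)

abbrev piG := PresentedGroup (stmt5Rels d r s)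

def Agen : piG d r s := PresentedGroup.of stmt5Gen_a
def Tgen : piG d r s := PresentedGroup.of stmt5Gen_t

lemma mk_rel_one {w : FreeGroup Bool} (hw : w ∈ stmt5Rels d r s) :
    PresentedGroup.mk (stmt5Rels d r s) w = 1 := by
  change QuotientGroup.mk w = 1
  apply (QuotientGroup.eq_one_iff _).mpr
  exact Subgroup.subset_normalClosure hw

lemma rel1 : Agen d r s ^ d = 1 := by
  have h := mk_rel_one d r s (w := FreeGroup.of stmt5Gen_a ^ d) (Set.mem_insert _ _)
  rw [map_pow] at h
  exact h

lemma rel2 : Tgen d r s ^ r * Agen d r s * (Tgen d r s ^ r)⁻¹ = Agen d r s ^ s := by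
  have h := mk_rel_one d r s
    (w := FreeGroup.of stmt5Gen_t ^ r * FreeGroup.of stmt5Gen_a *
      (FreeGroup.of stmt5Gen_t ^ r)⁻¹ * (FreeGroup.of stmt5Gen_a ^ s)⁻¹)
    (Set.mem_insert_of_mem _ rfl)
  simp only [map_mul, map_pow, map_inv, map_zpow] at h
  exact mul_inv_eq_one.mp h

def f0 : ℤ →+ Additive (piG d r s) :=
  AddMonoidHom.mk' (fun n : ℤ => Additive.ofMul (Agen d r s ^ n)) (fun a b => by simp [zpow_add])

lemma f0_d : f0 d r s (d : ℤ) = 0 := by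
  show Additive.ofMul (Agen d r s ^ (d : ℤ)) = 0
  rw [zpow_natCast, rel1]
  rfl

/-- the homomorphism `Multiplicative (ZMod d) →* π` sending `ofAdd x` to `a ^ x` -/
noncomputable def hA : Multiplicative (ZMod d) →* piG d r s :=
  AddMonoidHom.toMultiplicativeLeft (ZMod.lift d ⟨f0 d r s, f0_d d r s⟩)

lemma hA_int (n : ℤ) :
    hA d r s (Multiplicative.ofAdd ((n : ZMod d))) = Agen d r s ^ n := by
  have h : (ZMod.lift d ⟨f0 d r s, f0_d d r s⟩) ((n : ZMod d))
      = Additive.ofMul (Agen d r s ^ n) := ZMod.lift_coe _ _ n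
  exact congrArg Additive.toMul h

lemma hA_g : hA d r s (ofAdd (1 : ZMod d)) = Agen d r s := by
  have := hA_int d r s 1
  simpa using this

lemma hA_conj (a : Multiplicative (ZMod d)) :
    Tgen d r s ^ r * hA d r s a * (Tgen d r s ^ r)⁻¹ = hA d r s a ^ s := by
  have key : (MulAut.conj (Tgen d r s ^ r)).toMonoidHom.comp (hA d r s)
      = (hA d r s).comp (zpowGroupHom s) := by
    apply homA_ext
    simp only [MonoidHom.comp_apply, MulEquiv.coe_toMonoidHom, MulAut.conj_apply, hA_g]
    rw [rel2]
    show Agen d r s ^ s = hA d r s ((ofAdd (1 : ZMod d)) ^ s)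
    rw [map_zpow, hA_g]
  have h := DFunLike.congr_fun key a
  simp only [MonoidHom.comp_apply, MulEquiv.coe_toMonoidHom, MulAut.conj_apply] at h
  rw [h]
  show hA d r s (a ^ s) = _
  rw [map_zpow]


/-! ### The homomorphism into the semidirect product -/

noncomputable def φz : Multiplicative ℤ →* MulAut (K d r) := zpowersHom _ (σA s hs)

noncomputable def FΦ : Bool → (K d r ⋊[φz d r s hs] Multiplicative ℤ) := fun x =>
  if x then SemidirectProduct.inl (Monoid.CoprodI.of (i := (0 : Fin r)) (ofAdd (1 : ZMod d)))
  else SemidirectProduct.inr (ofAdd (1 : ℤ))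

lemma g_pow_d : (ofAdd (1 : ZMod d)) ^ d = 1 := by
  apply Multiplicative.toAdd.injective
  rw [toAdd_pow, toAdd_ofAdd, nsmul_eq_mul, mul_one, ZMod.natCast_self]
  rfl

lemma FΦ_rels : ∀ w ∈ stmt5Rels d r s, FreeGroup.lift (FΦ d r s hs) w = 1 := by
  intro w hw
  have ha : FΦ d r s hs stmt5Gen_a
      = SemidirectProduct.inl (Monoid.CoprodI.of (i := (0 : Fin r)) (ofAdd (1 : ZMod d))) := rfl
  have ht : FΦ d r s hs stmt5Gen_t = SemidirectProduct.inr (ofAdd (1 : ℤ)) := rfl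
  simp only [stmt5Rels, Set.mem_insert_iff, Set.mem_singleton_iff] at hw
  rcases hw with rfl | rfl
  · rw [map_pow, FreeGroup.lift_apply_of, ha, ← map_pow, ← map_pow, g_pow_d]
    simp
  · simp only [map_mul, map_inv, map_pow, map_zpow, FreeGroup.lift_apply_of, ha, ht]
    rw [← map_pow (SemidirectProduct.inr) (ofAdd (1 : ℤ)) r,
      ← map_zpow (SemidirectProduct.inl) _ s,
      ← map_inv SemidirectProduct.inr (ofAdd (1 : ℤ) ^ r), ← SemidirectProduct.inl_aut]
    have hφ : (φz d r s hs) ((ofAdd (1 : ℤ)) ^ r)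
        = (σA s hs : MulAut (K d r)) ^ r := by
      rw [map_pow]
      congr 1
    rw [hφ, σA_pow_r, tw_apply,
      ← map_zpow (Monoid.CoprodI.of (M := fun _ : Fin r => Multiplicative (ZMod d))
        (i := (0 : Fin r))) (ofAdd (1 : ZMod d)) s]
    simp

noncomputable def Φ : piG d r s →* (K d r ⋊[φz d r s hs] Multiplicative ℤ) :=
  PresentedGroup.toGroup (FΦ_rels d r s hs)

lemma Φ_a : Φ d r s hs (Agen d r s)
    = SemidirectProduct.inl (Monoid.CoprodI.of (i := (0 : Fin r)) (ofAdd (1 : ZMod d))) :=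
  PresentedGroup.toGroup.of _

lemma Φ_t : Φ d r s hs (Tgen d r s) = SemidirectProduct.inr (ofAdd (1 : ℤ)) :=
  PresentedGroup.toGroup.of _


/-! ### The homomorphism back -/

noncomputable def Ψ₁ : K d r →* piG d r s :=
  Monoid.CoprodI.lift fun i => (MulAut.conj (Tgen d r s ^ (i : ℕ))).toMonoidHom.comp (hA d r s)

lemma Ψ₁_of (i : Fin r) (a : Multiplicative (ZMod d)) :
    Ψ₁ d r s (Monoid.CoprodI.of (i := i) a)
      = Tgen d r s ^ (i : ℕ) * hA d r s a * (Tgen d r s ^ (i : ℕ))⁻¹ := by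
  rw [Ψ₁, Monoid.CoprodI.lift_of]
  rfl

lemma val_succ_eq_r {i : Fin r} (h : i + 1 = 0) : (i : ℕ) + 1 = r := by
  have hv : ((i : ℕ) + 1 % r) % r = 0 := congrArg Fin.val h
  have hlt : (i : ℕ) + 1 ≤ r := i.is_lt
  rcases Nat.lt_or_ge 1 r with h2 | h2
  · rw [Nat.mod_eq_of_lt h2] at hv
    rcases eq_or_lt_of_le hlt with he | hl
    · exact he
    · rw [Nat.mod_eq_of_lt hl] at hv
      omega
  · have := i.is_lt
    omega

lemma val_succ_eq {i : Fin r} (h : i + 1 ≠ 0) : ((i + 1 : Fin r) : ℕ) = (i : ℕ) + 1 := by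
  have hv : ((i + 1 : Fin r) : ℕ) = ((i : ℕ) + 1 % r) % r := rfl
  have h2 : 1 < r := by
    rcases Nat.lt_or_ge 1 r with h2 | h2
    · exact h2
    · exfalso
      apply h
      apply Fin.ext
      have ha := (i + 1 : Fin r).is_lt
      have hb := (0 : Fin r).is_lt
      omega
  have h1 : 1 % r = 1 := Nat.mod_eq_of_lt h2
  rcases eq_or_lt_of_le (show (i : ℕ) + 1 ≤ r from i.is_lt) with he | hl
  · exfalso
    apply h
    apply Fin.ext
    show ((i : ℕ) + 1 % r) % r = (0 : Fin r).val
    rw [h1, he, Nat.mod_self]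
    rfl
  · rw [hv, h1, Nat.mod_eq_of_lt hl]

lemma Ψ₁_step (k : K d r) :
    Ψ₁ d r s (σA s hs k) = Tgen d r s * Ψ₁ d r s k * (Tgen d r s)⁻¹ := by
  have key : (Ψ₁ d r s).comp (σA s hs).toMonoidHom
      = (MulAut.conj (Tgen d r s)).toMonoidHom.comp (Ψ₁ d r s) := by
    apply Monoid.CoprodI.ext_hom
    intro i
    refine MonoidHom.ext fun a => ?_
    simp only [MonoidHom.comp_apply, MulEquiv.coe_toMonoidHom, MulAut.conj_apply]
    rw [show (σA s hs) (Monoid.CoprodI.of (i := i) a) = _ from σA_of s hs i a, Ψ₁_of, Ψ₁_of]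
    by_cases h : i + 1 = 0
    · have hval := val_succ_eq_r (h := h)
      simp only [h, if_pos]
      have h0 : ((0 : Fin r) : ℕ) = 0 := rfl
      rw [h0, tw_apply]
      have hrhs : Tgen d r s * (Tgen d r s ^ (i : ℕ) * hA d r s a * (Tgen d r s ^ (i : ℕ))⁻¹) *
          (Tgen d r s)⁻¹ = Tgen d r s ^ r * hA d r s a * (Tgen d r s ^ r)⁻¹ := by
        have hpow : Tgen d r s ^ ((i : ℕ) + 1) = Tgen d r s ^ r := by rw [hval]
        rw [← hpow, pow_succ']
        group
      rw [hrhs, hA_conj, map_zpow]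
      group
    · have hval := val_succ_eq (h := h)
      simp only [h, if_neg, if_false]
      rw [hval, pow_succ']
      group
  exact DFunLike.congr_fun key k

lemma Ψ₁_zpow (n : ℤ) (k : K d r) :
    Ψ₁ d r s ((σA s hs ^ n : MulAut (K d r)) k)
      = Tgen d r s ^ n * Ψ₁ d r s k * (Tgen d r s ^ n)⁻¹ := by
  induction n using Int.induction_on generalizing k with
  | zero => simp
  | succ n ih =>
    rw [show (σA s hs ^ ((n : ℤ) + 1) : MulAut (K d r)) = σA s hs ^ (n : ℤ) * σA s hs from
      zpow_add_one _ _, MulAut.mul_apply, ih, Ψ₁_step, zpow_add_one]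
    group
  | pred n ih =>
    have hstep : Ψ₁ d r s (((σA s hs)⁻¹ : MulAut (K d r)) k)
        = (Tgen d r s)⁻¹ * Ψ₁ d r s k * Tgen d r s := by
      have h2 : (σA s hs) (((σA s hs)⁻¹ : MulAut (K d r)) k) = k := by
        rw [← MulAut.mul_apply, mul_inv_cancel, MulAut.one_apply]
      have h3 := Ψ₁_step d r s hs (((σA s hs)⁻¹ : MulAut (K d r)) k)
      rw [h2] at h3
      rw [h3]
      group
    rw [show (σA s hs ^ (-(n : ℤ) - 1) : MulAut (K d r))
        = σA s hs ^ (-(n : ℤ)) * (σA s hs)⁻¹ from by rw [← zpow_neg_one, ← zpow_add]; ring_nf,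
      MulAut.mul_apply, ih, hstep, show -(n : ℤ) - 1 = -(n : ℤ) + (-1) from by ring, zpow_add,
      zpow_neg_one]
    group

lemma compat : ∀ g : Multiplicative ℤ,
    (Ψ₁ d r s).comp ((φz d r s hs) g).toMonoidHom
      = (MulAut.conj (zpowersHom (piG d r s) (Tgen d r s) g)).toMonoidHom.comp (Ψ₁ d r s) := by
  intro g
  refine MonoidHom.ext fun k => ?_
  simp only [MonoidHom.comp_apply, MulEquiv.coe_toMonoidHom, MulAut.conj_apply,
    zpowersHom_apply, φz]
  exact Ψ₁_zpow d r s hs _ k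

noncomputable def Ψ : (K d r ⋊[φz d r s hs] Multiplicative ℤ) →* piG d r s :=
  SemidirectProduct.lift (Ψ₁ d r s) (zpowersHom _ (Tgen d r s)) (compat d r s hs)


lemma ΨΦ : (Ψ d r s hs).comp (Φ d r s hs) = MonoidHom.id (piG d r s) := by
  apply PresentedGroup.ext
  intro x
  simp only [MonoidHom.comp_apply, MonoidHom.id_apply]
  cases x
  · -- x = false = t
    rw [show PresentedGroup.of (rels := stmt5Rels d r s) false = Tgen d r s from rfl, Φ_t]
    rw [show Ψ d r s hs (SemidirectProduct.inr (ofAdd (1 : ℤ)))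
      = zpowersHom _ (Tgen d r s) (ofAdd (1 : ℤ)) from SemidirectProduct.lift_inr _ _ _ _]
    simp
  · -- x = true = a
    rw [show PresentedGroup.of (rels := stmt5Rels d r s) true = Agen d r s from rfl, Φ_a]
    rw [show Ψ d r s hs (SemidirectProduct.inl (Monoid.CoprodI.of (i := (0 : Fin r))
        (ofAdd (1 : ZMod d))))
      = Ψ₁ d r s (Monoid.CoprodI.of (i := (0 : Fin r)) (ofAdd (1 : ZMod d)))
      from SemidirectProduct.lift_inl _ _ _ _]
    rw [Ψ₁_of]
    rw [show (((0 : Fin r) : ℕ)) = 0 from rfl, pow_zero, hA_g]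
    group

lemma Φ_hA (a : Multiplicative (ZMod d)) :
    Φ d r s hs (hA d r s a)
      = SemidirectProduct.inl (Monoid.CoprodI.of (i := (0 : Fin r)) a) := by
  have key : (Φ d r s hs).comp (hA d r s)
      = (SemidirectProduct.inl (φ := φz d r s hs)).comp
          (Monoid.CoprodI.of (M := fun _ : Fin r => Multiplicative (ZMod d)) (i := (0 : Fin r))) := by
    apply homA_ext
    simp only [MonoidHom.comp_apply, hA_g, Φ_a]
  exact DFunLike.congr_fun key a

lemma ΦΨ : (Φ d r s hs).comp (Ψ d r s hs)
    = MonoidHom.id (K d r ⋊[φz d r s hs] Multiplicative ℤ) := by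
  apply SemidirectProduct.hom_ext
  · apply Monoid.CoprodI.ext_hom
    intro i
    refine MonoidHom.ext fun a => ?_
    simp only [MonoidHom.comp_apply, MonoidHom.id_apply]
    rw [show SemidirectProduct.inl (φ := φz d r s hs) (Monoid.CoprodI.of (i := i) a)
        = SemidirectProduct.inl (Monoid.CoprodI.of (i := i) a) from rfl]
    rw [show Ψ d r s hs (SemidirectProduct.inl (Monoid.CoprodI.of (i := i) a))
      = Ψ₁ d r s (Monoid.CoprodI.of (i := i) a) from SemidirectProduct.lift_inl _ _ _ _]
    rw [Ψ₁_of, map_mul, map_mul, map_inv, map_pow, Φ_t, Φ_hA]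
    rw [← map_pow (SemidirectProduct.inr) (ofAdd (1 : ℤ)) (i : ℕ),
      ← map_inv SemidirectProduct.inr (ofAdd (1 : ℤ) ^ (i : ℕ)), ← SemidirectProduct.inl_aut]
    congr 1
    have hφ : (φz d r s hs) ((ofAdd (1 : ℤ)) ^ (i : ℕ))
        = (σA s hs : MulAut (K d r)) ^ (i : ℕ) := by
      rw [map_pow]
      congr 1
    rw [hφ, σA_pow_of s hs (i : ℕ) i.is_lt a]
  · apply MonoidHom.ext_mint
    simp only [MonoidHom.comp_apply, MonoidHom.id_apply]
    rw [show SemidirectProduct.inr (φ := φz d r s hs) (ofAdd (1 : ℤ))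
        = SemidirectProduct.inr (ofAdd (1 : ℤ)) from rfl]
    rw [show Ψ d r s hs (SemidirectProduct.inr (ofAdd (1 : ℤ)))
      = zpowersHom _ (Tgen d r s) (ofAdd (1 : ℤ)) from SemidirectProduct.lift_inr _ _ _ _]
    simp [Φ_t]

/-- the isomorphism `π ≃* K ⋊ ℤ` -/
noncomputable def isoSD : piG d r s ≃* (K d r ⋊[φz d r s hs] Multiplicative ℤ) :=
  MonoidHom.toMulEquiv (Φ d r s hs) (Ψ d r s hs) (ΨΦ d r s hs) (ΦΨ d r s hs)

end Stmt5Aux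

/-- For `d, r ≥ 1` and `gcd(s, d) = 1`, let `π = ⟨a, t | a^d = 1, t^r a t^{-r} = a^s⟩`
and let `ε : π → ℤ` be the homomorphism with `ε(a) = 0` and `ε(t) = 1` (written multiplicatively,
with values in `Multiplicative ℤ`).  Then `ker ε` is isomorphic to the free product of `r` copies
of the cyclic group `ℤ/dℤ`. -/
theorem stmt_5 (d r : ℕ) (hd : 1 ≤ d) (hr : 1 ≤ r) (s : ℤ) (hs : Int.gcd s d = 1)
    (ε : PresentedGroup (stmt5Rels d r s) →* Multiplicative ℤ)
    (hεa : ε (PresentedGroup.of stmt5Gen_a) = 1)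
    (hεt : ε (PresentedGroup.of stmt5Gen_t) = Multiplicative.ofAdd 1) :
    Nonempty (ε.ker ≃* Monoid.CoprodI (fun _ : Fin r => Multiplicative (ZMod d))) := by
  haveI : NeZero d := ⟨by omega⟩
  haveI : NeZero r := ⟨by omega⟩
  set e := Stmt5Aux.isoSD d r s hs with he
  have hcoe : e.toMonoidHom = Stmt5Aux.Φ d r s hs := by
    exact MonoidHom.ext fun x => rfl
  have hε : ε = (SemidirectProduct.rightHom).comp (Stmt5Aux.Φ d r s hs) := by
    apply PresentedGroup.ext
    intro x
    simp only [MonoidHom.comp_apply]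
    cases x
    · rw [show PresentedGroup.of (rels := stmt5Rels d r s) false
          = PresentedGroup.of stmt5Gen_t from rfl, hεt,
        show PresentedGroup.of (rels := stmt5Rels d r s) stmt5Gen_t
          = Stmt5Aux.Tgen d r s from rfl, Stmt5Aux.Φ_t]
      simp
    · rw [show PresentedGroup.of (rels := stmt5Rels d r s) true
          = PresentedGroup.of stmt5Gen_a from rfl, hεa,
        show PresentedGroup.of (rels := stmt5Rels d r s) stmt5Gen_a
          = Stmt5Aux.Agen d r s from rfl, Stmt5Aux.Φ_a]
      simp
  have hker : ε.ker = Subgroup.comap e.toMonoidHom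
      (MonoidHom.ker SemidirectProduct.rightHom) := by
    rw [hcoe, MonoidHom.comap_ker, ← hε]
  have hmap : Subgroup.map e.toMonoidHom ε.ker
      = MonoidHom.ker (SemidirectProduct.rightHom
          (φ := Stmt5Aux.φz d r s hs)) := by
    rw [hker]
    exact Subgroup.map_comap_eq_self_of_surjective e.surjective _
  have e1 : ε.ker ≃* Subgroup.map e.toMonoidHom ε.ker := MulEquiv.subgroupMap e ε.ker
  have e2 : (Subgroup.map e.toMonoidHom ε.ker) ≃*
      (MonoidHom.ker (SemidirectProduct.rightHom (φ := Stmt5Aux.φz d r s hs))) :=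
    MulEquiv.subgroupCongr hmap
  have e3 : (MonoidHom.range (SemidirectProduct.inl
        (φ := Stmt5Aux.φz d r s hs))) ≃*
      (MonoidHom.ker (SemidirectProduct.rightHom (φ := Stmt5Aux.φz d r s hs))) :=
    MulEquiv.subgroupCongr SemidirectProduct.range_inl_eq_ker_rightHom
  have e4 : Stmt5Aux.K d r ≃* (MonoidHom.range (SemidirectProduct.inl
        (φ := Stmt5Aux.φz d r s hs))) :=
    MonoidHom.ofInjective SemidirectProduct.inl_injective
  exact ⟨((e1.trans e2).trans e3.symm).trans e4.symm⟩
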